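/- The function f : (0, ∞) → ℝ defined by f(x) = √x·(1 + (1/8)·(ln x)²) is concave on (0, ∞). -/

import Mathlib

theorem concaveOn_sqrt_log :
    ConcaveOn ℝ (Set.Ioi (0 : ℝ))
      (fun x : ℝ => Real.sqrt x * (1 + (1 / 8) * (Real.log x) ^ 2)) := by
  set f' : ℝ → ℝ := fun x =>
    (1 / 2 + (1 / 4) * Real.log x + (1 / 16) * (Real.log x) ^ 2) / Real.sqrt x with hf'def
  set f'' : ℝ → ℝ := fun x => -(Real.log x) ^ 2 / (32 * (x * Real.sqrt x)) with hf''def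
  have key1 : ∀ x ∈ Set.Ioi (0 : ℝ),
      HasDerivAt (fun x : ℝ => Real.sqrt x * (1 + (1 / 8) * (Real.log x) ^ 2)) (f' x) x := by
    intro x hx
    have hx : (0 : ℝ) < x := hx
    have hs : Real.sqrt x * Real.sqrt x = x := Real.mul_self_sqrt hx.le
    have hs0 : Real.sqrt x ≠ 0 := (Real.sqrt_pos.2 hx).ne'
    have h1 : HasDerivAt Real.sqrt (1 / (2 * Real.sqrt x)) x := Real.hasDerivAt_sqrt hx.ne'
    have hL : HasDerivAt Real.log x⁻¹ x := Real.hasDerivAt_log hx.ne'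
    have h2 : HasDerivAt (fun x : ℝ => 1 + (1 / 8) * (Real.log x) ^ 2)
        ((1 / 8) * (2 * Real.log x ^ 1 * x⁻¹)) x := ((hL.pow 2).const_mul _).const_add 1
    have := h1.mul h2
    refine this.congr_deriv (Eq.symm ?_)
    rw [hf'def]
    have hs3 : Real.sqrt x ^ 3 = x * Real.sqrt x := by
      rw [pow_succ, Real.sq_sqrt hx.le]
    field_simp
    ring_nf
    rw [Real.sq_sqrt hx.le]
  have key2 : ∀ x ∈ Set.Ioi (0 : ℝ), HasDerivAt f' (f'' x) x := by
    intro x hx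
    have hx : (0 : ℝ) < x := hx
    have hs : Real.sqrt x * Real.sqrt x = x := Real.mul_self_sqrt hx.le
    have hs0 : Real.sqrt x ≠ 0 := (Real.sqrt_pos.2 hx).ne'
    have h1 : HasDerivAt Real.sqrt (1 / (2 * Real.sqrt x)) x := Real.hasDerivAt_sqrt hx.ne'
    have hL : HasDerivAt Real.log x⁻¹ x := Real.hasDerivAt_log hx.ne'
    have hg : HasDerivAt (fun x : ℝ =>
        1 / 2 + (1 / 4) * Real.log x + (1 / 16) * (Real.log x) ^ 2)
        ((1 / 4) * x⁻¹ + (1 / 16) * (2 * Real.log x ^ 1 * x⁻¹)) x :=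
      (((hL.const_mul (1/4 : ℝ)).const_add (1/2)).add ((hL.pow 2).const_mul _))
    have := hg.div h1 hs0
    refine this.congr_deriv (Eq.symm ?_)
    rw [hf''def]
    have hs3 : Real.sqrt x ^ 3 = x * Real.sqrt x := by
      rw [pow_succ, Real.sq_sqrt hx.le]
    field_simp
    ring_nf
    rw [Real.sq_sqrt hx.le]
    ring
  have hcont : ContinuousOn (fun x : ℝ => Real.sqrt x * (1 + (1 / 8) * (Real.log x) ^ 2))
      (Set.Ioi (0 : ℝ)) := by
    refine Real.continuous_sqrt.continuousOn.mul (continuousOn_const.add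
      (continuousOn_const.mul ((Real.continuousOn_log.mono ?_).pow 2)))
    intro x hx
    exact ne_of_gt hx
  refine concaveOn_of_hasDerivWithinAt2_nonpos (convex_Ioi 0) hcont
    (f' := f') (f'' := f'') ?_ ?_ ?_
  · rw [interior_Ioi]
    exact fun x hx => (key1 x hx).hasDerivWithinAt
  · rw [interior_Ioi]
    exact fun x hx => (key2 x hx).hasDerivWithinAt
  · rw [interior_Ioi]
    intro x hx
    have hx : (0 : ℝ) < x := hx
    have : (0:ℝ) < 32 * (x * Real.sqrt x) := by positivity
    exact div_nonpos_of_nonpos_of_nonneg (neg_nonpos.2 (sq_nonneg _)) this.le
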